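/- There exists a unique polynomial P of degree at most d−1 in p with coefficients in O such that for every i with 1 ≤ i ≤ d, ∂_x(p_i) + p_i·∂_y(p_i) = P(p_i), where p_1,...,p_d ∈ O are given with all pairwise differences invertible. Moreover P = −V, where V is the associated polynomial of order 0 of F = ∏(p − p_i). -/
import Mathlib


open Polynomial

/-- Coefficientwise application of a derivation `δ` of `O` to a polynomial in `O[X]`. -/
noncomputable def cderiv {O : Type*} [CommRing O] (δ : O → O) (f : O[X]) : O[X] :=
  f.sum fun n a => C (δ a) * X ^ n

/-- The Sylvester matrix of `f` (degree `n`) and `g` (degree `m`); its determinant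
is the resultant of `f` and `g`. -/
noncomputable def sylvester {O : Type*} [CommRing O] (f g : O[X]) (n m : ℕ) :
    Matrix (Fin (m + n)) (Fin (m + n)) O :=
  Matrix.of fun i j =>
    if (i : ℕ) < m then
      (if (i : ℕ) ≤ (j : ℕ) ∧ (j : ℕ) ≤ (i : ℕ) + n then f.coeff (n - ((j : ℕ) - (i : ℕ))) else 0)
    else
      (if (i : ℕ) - m ≤ (j : ℕ) ∧ (j : ℕ) ≤ (i : ℕ) - m + m then
        g.coeff (m - ((j : ℕ) - ((i : ℕ) - m))) else 0)

-- derivation through eval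
lemma cderiv_eval {O : Type*} [CommRing O] (δ : Derivation ℤ O O) (f : O[X]) (x : O) :
    δ (f.eval x) = (cderiv (δ ·) f).eval x + (derivative f).eval x * δ x := by
  induction f using Polynomial.induction_on' with
  | add p q hp hq =>
    have hadd : cderiv (δ ·) (p + q) = cderiv (δ ·) p + cderiv (δ ·) q := by
      unfold cderiv
      apply Polynomial.sum_add_index <;> intros <;> simp [mul_add, add_mul]
    simp only [eval_add, map_add, derivative_add, hadd, hp, hq]
    ring
  | monomial n a =>
    have hm : cderiv (δ ·) (monomial n a) = C (δ a) * X ^ n := by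
      unfold cderiv
      apply Polynomial.sum_monomial_index
      simp
    rw [hm]
    simp only [eval_monomial, derivative_monomial, eval_mul, eval_C, eval_pow, eval_X,
      eval_natCast]
    rw [Derivation.leibniz, Derivation.leibniz_pow]
    simp [smul_smul]
    ring

lemma poly_eq_zero {O : Type*} [CommRing O] :
    ∀ (d : ℕ) (p : Fin d → O) (_ : ∀ i j, i ≠ j → IsUnit (p i - p j)) (f : O[X]),
      f.natDegree < d → (∀ i, f.eval (p i) = 0) → f = 0 := by
  intro d
  induction d with
  | zero => intro p _ f h; omega
  | succ d ih =>
    intro p hp f hdeg heval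
    nontriviality O
    have hroot : IsRoot f (p (Fin.last d)) := heval _
    obtain ⟨g, hg⟩ := (dvd_iff_isRoot.mpr hroot)
    by_cases hg0 : g = 0
    · rw [hg, hg0, mul_zero]
    · have hmon : (X - C (p (Fin.last d))).Monic := monic_X_sub_C _
      have hdeg' : g.natDegree < d := by
        have := natDegree_mul' (p := X - C (p (Fin.last d))) (q := g)
          (by rw [hmon.leadingCoeff, one_mul]; exact leadingCoeff_ne_zero.mpr hg0)
        rw [← hg, natDegree_X_sub_C] at this
        omega
      have heval' : ∀ i : Fin d, g.eval (p i.castSucc) = 0 := by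
        intro i
        have h0 := heval i.castSucc
        rw [hg, eval_mul, eval_sub, eval_X, eval_C] at h0
        have hu : IsUnit (p i.castSucc - p (Fin.last d)) :=
          hp _ _ (by simp [Fin.ext_iff]; omega)
        obtain ⟨u, hu⟩ := hu
        rwa [← hu, Units.mul_right_eq_zero] at h0
      have := ih (fun i => p i.castSucc)
        (fun i j hij => hp _ _ (by simpa [Fin.ext_iff] using Fin.val_ne_of_ne hij)) g hdeg' heval'
      exact absurd this hg0


/-- Linearization polynomial.  There is a unique polynomial `P` of
degree `≤ d − 1` with `P(p_i) = ∂_x p_i + p_i ∂_y p_i` for all `i`; moreover `P = −V`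
where `V` is the associated polynomial of order `0` of `F = ∏ (p − p_i)`. -/
theorem statement5 {O : Type*} [CommRing O] (dx dy : Derivation ℤ O O)
    (d : ℕ) (hd : 3 ≤ d)
    (p : Fin d → O) (hp : ∀ i j, i ≠ j → IsUnit (p i - p j))
    (F : O[X]) (hF : F = ∏ i, (X - C (p i)))
    (U V : O[X]) (hU : U.natDegree ≤ d - 2) (hV : V.natDegree ≤ d - 1)
    (hUV : cderiv (dx ·) F + X * cderiv (dy ·) F = U * F + V * derivative F) :
    (∃! P : O[X], P.natDegree ≤ d - 1 ∧
        ∀ i, P.eval (p i) = dx (p i) + p i * dy (p i)) ∧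
    ((-V).natDegree ≤ d - 1 ∧ ∀ i, (-V).eval (p i) = dx (p i) + p i * dy (p i)) := by
  classical
  -- F eval at p i is 0
  have hF0 : ∀ i, F.eval (p i) = 0 := by
    intro i
    rw [hF, eval_prod]
    exact Finset.prod_eq_zero (Finset.mem_univ i) (by simp)
  -- derivative of F at p i is a unit
  have hFd : ∀ i, (derivative F).eval (p i) = ∏ j ∈ Finset.univ.erase i, (p i - p j) := by
    intro i
    have hsplit : F = (X - C (p i)) * ∏ j ∈ Finset.univ.erase i, (X - C (p j)) :=
      hF.trans (Finset.mul_prod_erase _ _ (Finset.mem_univ i)).symm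
    rw [hsplit, derivative_mul, eval_add, eval_mul, eval_mul]
    simp [eval_prod]
  have hFdu : ∀ i, IsUnit ((derivative F).eval (p i)) := by
    intro i
    rw [hFd]
    apply Finset.prod_induction _ IsUnit (fun _ _ => IsUnit.mul) isUnit_one
    intro j hj
    exact hp _ _ (fun h => by simp [h] at hj)
  -- main computation
  have key : ∀ i, (-V).eval (p i) = dx (p i) + p i * dy (p i) := by
    intro i
    set D := (derivative F).eval (p i) with hD
    have h1 := congrArg (eval (p i)) hUV
    simp only [eval_add, eval_mul, eval_X, hF0 i, mul_zero, zero_add] at h1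
    have hx : (cderiv (dx ·) F).eval (p i) = -(D * dx (p i)) := by
      have h := cderiv_eval dx F (p i)
      rw [hF0 i, map_zero] at h
      exact (eq_neg_of_add_eq_zero_left h.symm)
    have hy : (cderiv (dy ·) F).eval (p i) = -(D * dy (p i)) := by
      have h := cderiv_eval dy F (p i)
      rw [hF0 i, map_zero] at h
      exact (eq_neg_of_add_eq_zero_left h.symm)
    rw [hx, hy] at h1
    have hcancel : D * (-V).eval (p i) = D * (dx (p i) + p i * dy (p i)) := by
      rw [eval_neg]
      linear_combination h1
    exact (hFdu i).mul_left_cancel hcancel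
  have hVdeg : (-V).natDegree ≤ d - 1 := by rwa [natDegree_neg]
  refine ⟨⟨-V, ⟨hVdeg, key⟩, ?_⟩, hVdeg, key⟩
  rintro Q ⟨hQdeg, hQ⟩
  have hdiff : Q - (-V) = 0 := by
    apply poly_eq_zero d p hp
    · calc (Q - (-V)).natDegree ≤ max Q.natDegree (-V).natDegree := natDegree_sub_le _ _
        _ ≤ d - 1 := max_le hQdeg hVdeg
        _ < d := by omega
    · intro i
      rw [eval_sub, hQ i, key i, sub_self]
  exact sub_eq_zero.mp hdiff
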